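/- Let λ ∈ [0,1] and let ρ_λ = λ|ψ000⟩⟨ψ000| + (1−λ)|ψ100⟩⟨ψ100| as an 8×8 complex matrix. Consider the set of real numbers Re Tr(B_3 ρ_λ), where B_3 = (A_{10}+A_{11})⊗A_{20}⊗A_{30} + (A_{10}−A_{11})⊗A_{21}⊗I₂ + (A_{10}−A_{11})⊗I₂⊗A_{31}, and the six matrices A_{10}, A_{11}, A_{20}, A_{21}, A_{30}, A_{31} range over all traceless Hermitian 2×2 complex matrices squaring to the identity. Then 2√((2λ−1)² + 4) is the greatest element of this set (it is an upper bound and it is attained). -/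

import Mathlib

open Matrix BigOperators Finset

noncomputable section

/-- Tensor product of `N` 2×2 complex matrices, indexed by bit strings `Fin N → Fin 2`. -/
def tensorN (N : ℕ) (M : Fin N → Matrix (Fin 2) (Fin 2) ℂ) :
    Matrix (Fin N → Fin 2) (Fin N → Fin 2) ℂ :=
  Matrix.of fun f g => ∏ i, M i (f i) (g i)

/-- The three-qubit GHZ basis vector
`|ψ_{ijk}⟩ = (1/√2)(e_{(0,j,k)} + (−1)^i e_{(1,1−j,1−k)})`. -/
def psi (i j k : Fin 2) : (Fin 3 → Fin 2) → ℂ := fun f =>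
  ((Real.sqrt 2 : ℝ) : ℂ)⁻¹ *
    ((if f = ![0, j, k] then 1 else 0)
      + (-1 : ℂ) ^ (i : ℕ) * (if f = ![1, 1 - j, 1 - k] then 1 else 0))

/-- The rank-one projection `|ψ⟩⟨ψ|`. -/
def outer (ψ : (Fin 3 → Fin 2) → ℂ) : Matrix (Fin 3 → Fin 2) (Fin 3 → Fin 2) ℂ :=
  Matrix.of fun f g => ψ f * (starRingEnd ℂ) (ψ g)

lemma sum_ite_push {α : Type*} [Fintype α] (P : Prop) [Decidable P] (f : α → ℂ) :
    ∑ x, (if P then f x else 0) = if P then ∑ x, f x else 0 := by split <;> simp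

lemma trace_formula (M : Matrix (Fin 3 → Fin 2) (Fin 3 → Fin 2) ℂ) (lam : ℝ) :
    ((M * ((lam:ℂ) • outer (psi 0 0 0) + ((1-lam:ℝ):ℂ) • outer (psi 1 0 0))).trace)
    = (((1/2 : ℝ)):ℂ) * (M ![0,0,0] ![0,0,0] + M ![1,1,1] ![1,1,1])
      + (((2*lam-1)/2 : ℝ) : ℂ) * (M ![0,0,0] ![1,1,1] + M ![1,1,1] ![0,0,0]) := by
  have h2 : (((Real.sqrt 2 : ℝ) : ℂ)⁻¹) * (((Real.sqrt 2 : ℝ) : ℂ)⁻¹) = 1/2 := by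
    rw [← mul_inv, ← Complex.ofReal_mul, Real.mul_self_sqrt (by norm_num : (0:ℝ) ≤ 2)]
    norm_num
  have hjk : (1 - 0 : Fin 2) = 1 := by decide
  simp only [Matrix.trace, Matrix.diag, Matrix.mul_apply, Matrix.add_apply, Matrix.smul_apply,
    outer, psi, Matrix.of_apply, hjk, pow_zero, pow_one, one_mul, _root_.map_mul, map_add,
    _root_.map_one, map_inv₀, Complex.conj_ofReal, map_neg, mul_add, add_mul, mul_ite, ite_mul,
    mul_zero, zero_mul, mul_one, one_mul, neg_mul, mul_neg, neg_neg, smul_eq_mul,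
    apply_ite (starRingEnd ℂ), map_zero, Fin.val_zero, Fin.val_one, pow_zero, pow_one,
    Finset.sum_ite_eq', Finset.mem_univ, if_true, Finset.sum_add_distrib]
  simp only [neg_add, apply_ite (fun z : ℂ => -z), neg_zero, neg_neg, sub_eq_add_neg,
    sum_ite_push, Finset.sum_sub_distrib,
    Finset.sum_add_distrib, Finset.sum_ite_eq', Finset.mem_univ, if_true]
  ring_nf
  simp only [pow_two, h2]
  push_cast
  ring

lemma obs_param {A : Matrix (Fin 2) (Fin 2) ℂ} (ht : A.trace = 0) (hh : A.IsHermitian)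
    (hs : A ^ 2 = 1) :
    ∃ (c : ℝ) (b : ℂ), A 0 0 = (c:ℂ) ∧ A 1 1 = -(c:ℂ) ∧ A 0 1 = b ∧
      A 1 0 = (starRingEnd ℂ) b ∧ c ^ 2 + Complex.normSq b = 1 := by
  have h00 : (starRingEnd ℂ) (A 0 0) = A 0 0 := by
    conv_rhs => rw [← hh]
    simp [Matrix.conjTranspose_apply]
  obtain ⟨c, hc⟩ : ∃ c : ℝ, A 0 0 = (c:ℂ) :=
    ⟨(A 0 0).re, ((Complex.conj_eq_iff_re).1 h00).symm⟩
  have h10 : A 1 0 = (starRingEnd ℂ) (A 0 1) := by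
    conv_lhs => rw [← hh]
    simp [Matrix.conjTranspose_apply]
  have htr : A 0 0 + A 1 1 = 0 := by
    have := ht
    rwa [Matrix.trace_fin_two] at this
  have hsq : A 0 0 * A 0 0 + A 0 1 * A 1 0 = 1 := by
    have h2 : (A ^ 2) 0 0 = (1 : Matrix (Fin 2) (Fin 2) ℂ) 0 0 := by rw [hs]
    rw [pow_two, Matrix.mul_apply, Fin.sum_univ_two, Matrix.one_apply_eq] at h2
    exact h2
  refine ⟨c, A 0 1, hc, by rw [← neg_eq_of_add_eq_zero_right htr, hc], rfl, h10, ?_⟩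
  rw [hc, h10, Complex.mul_conj] at hsq
  have : ((c ^ 2 + Complex.normSq (A 0 1) : ℝ) : ℂ) = ((1:ℝ):ℂ) := by
    push_cast; linear_combination hsq
  exact_mod_cast this

lemma tensor_entry (X Y Z : Matrix (Fin 2) (Fin 2) ℂ) (f g : Fin 3 → Fin 2) :
    tensorN 3 ![X, Y, Z] f g = X (f 0) (g 0) * Y (f 1) (g 1) * Z (f 2) (g 2) := by
  simp [tensorN, Fin.prod_univ_three]

set_option maxHeartbeats 1600000 in
lemma value_formula (lam c1 c1' c2 c3 c4 c5 : ℝ) (b1 b1' b2 b3 b4 b5 : ℂ)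
    (A10 A11 A20 A21 A30 A31 : Matrix (Fin 2) (Fin 2) ℂ)
    (e10 : A10 0 0 = (c1:ℂ) ∧ A10 1 1 = -(c1:ℂ) ∧ A10 0 1 = b1 ∧ A10 1 0 = (starRingEnd ℂ) b1)
    (e11 : A11 0 0 = (c1':ℂ) ∧ A11 1 1 = -(c1':ℂ) ∧ A11 0 1 = b1' ∧ A11 1 0 = (starRingEnd ℂ) b1')
    (e20 : A20 0 0 = (c2:ℂ) ∧ A20 1 1 = -(c2:ℂ) ∧ A20 0 1 = b2 ∧ A20 1 0 = (starRingEnd ℂ) b2)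
    (e21 : A21 0 0 = (c4:ℂ) ∧ A21 1 1 = -(c4:ℂ) ∧ A21 0 1 = b4 ∧ A21 1 0 = (starRingEnd ℂ) b4)
    (e30 : A30 0 0 = (c3:ℂ) ∧ A30 1 1 = -(c3:ℂ) ∧ A30 0 1 = b3 ∧ A30 1 0 = (starRingEnd ℂ) b3)
    (e31 : A31 0 0 = (c5:ℂ) ∧ A31 1 1 = -(c5:ℂ) ∧ A31 0 1 = b5 ∧ A31 1 0 = (starRingEnd ℂ) b5) :
    (((tensorN 3 ![A10 + A11, A20, A30]
        + tensorN 3 ![A10 - A11, A21, 1]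
        + tensorN 3 ![A10 - A11, 1, A31])
      * ((lam : ℂ) • outer (psi 0 0 0)
          + ((1 - lam : ℝ) : ℂ) • outer (psi 1 0 0))).trace).re
    = (2*lam-1) * (((b1 + b1') * b2 * b3).re) + (c1 - c1') * (c4 + c5) := by
  obtain ⟨h10a, h10b, h10c, h10d⟩ := e10
  obtain ⟨h11a, h11b, h11c, h11d⟩ := e11
  obtain ⟨h20a, h20b, h20c, h20d⟩ := e20
  obtain ⟨h21a, h21b, h21c, h21d⟩ := e21
  obtain ⟨h30a, h30b, h30c, h30d⟩ := e30
  obtain ⟨h31a, h31b, h31c, h31d⟩ := e31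
  rw [trace_formula]
  simp only [tensor_entry, Matrix.one_apply, Matrix.add_apply, Matrix.sub_apply,
    Matrix.cons_val_zero, Matrix.cons_val_one, Matrix.cons_val_two, Matrix.tail_cons,
    Matrix.head_cons]
  norm_num
  simp only [h10a, h10b, h10c, h10d, h11a, h11b, h11c, h11d, h20a, h20b, h20c, h20d,
    h21a, h21b, h21c, h21d, h30a, h30b, h30c, h30d, h31a, h31b, h31c, h31d]
  simp only [Complex.add_re, Complex.add_im, Complex.mul_re, Complex.mul_im, Complex.sub_re,
    Complex.sub_im, Complex.neg_re, Complex.neg_im, Complex.ofReal_re, Complex.ofReal_im,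
    Complex.conj_re, Complex.conj_im, Complex.one_re, Complex.one_im, Complex.zero_re,
    Complex.zero_im]
  ring

set_option maxHeartbeats 800000 in
lemma bound_lemma (t c1 c1' c4 c5 : ℝ) (b1 b1' b2 b3 : ℂ)
    (h1 : c1 ^ 2 + Complex.normSq b1 = 1) (h1' : c1' ^ 2 + Complex.normSq b1' = 1)
    (hb2 : ‖b2‖ ≤ 1) (hb3 : ‖b3‖ ≤ 1)
    (h4 : c4 ^ 2 ≤ 1) (h5 : c5 ^ 2 ≤ 1) :
    t * (((b1 + b1') * b2 * b3).re) + (c1 - c1') * (c4 + c5)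
      ≤ 2 * Real.sqrt (t ^ 2 + 4) := by
  have hs0 : (0:ℝ) ≤ Real.sqrt (t ^ 2 + 4) := Real.sqrt_nonneg _
  have hs2 : Real.sqrt (t ^ 2 + 4) ^ 2 = t ^ 2 + 4 := Real.sq_sqrt (by positivity)
  have hP0 : 0 ≤ ‖b1 + b1'‖ := norm_nonneg _
  have hQ0 : (0:ℝ) ≤ |c1 - c1'| := abs_nonneg _
  have hc4 : |c4| ≤ 1 := by
    rw [abs_le]; constructor <;> nlinarith [sq_nonneg (c4 - 1), sq_nonneg (c4 + 1)]
  have hc5 : |c5| ≤ 1 := by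
    rw [abs_le]; constructor <;> nlinarith [sq_nonneg (c5 - 1), sq_nonneg (c5 + 1)]
  have step1 : t * (((b1 + b1') * b2 * b3).re) ≤ |t| * ‖b1 + b1'‖ := by
    have e : ‖(b1 + b1') * b2 * b3‖
        = ‖b1 + b1'‖ * ‖b2‖ * ‖b3‖ := by
      rw [norm_mul, norm_mul]
    have habs2 : ‖(b1 + b1') * b2 * b3‖ ≤ ‖b1 + b1'‖ := by
      rw [e]
      nlinarith [norm_nonneg b2, norm_nonneg b3, hP0, hb2, hb3,
        mul_nonneg hP0 (norm_nonneg b2)]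
    calc t * (((b1 + b1') * b2 * b3).re)
        ≤ |t * (((b1 + b1') * b2 * b3).re)| := le_abs_self _
      _ = |t| * |((b1 + b1') * b2 * b3).re| := abs_mul _ _
      _ ≤ |t| * ‖(b1 + b1') * b2 * b3‖ :=
          mul_le_mul le_rfl (Complex.abs_re_le_norm _) (abs_nonneg _) (abs_nonneg _)
      _ ≤ |t| * ‖b1 + b1'‖ :=
          mul_le_mul le_rfl habs2 (norm_nonneg _) (abs_nonneg _)
  have step2 : (c1 - c1') * (c4 + c5) ≤ |c1 - c1'| * 2 := by
    have h45 : |c4 + c5| ≤ 2 := by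
      calc |c4 + c5| ≤ |c4| + |c5| := abs_add_le _ _
        _ ≤ 2 := by linarith
    calc (c1 - c1') * (c4 + c5) ≤ |(c1 - c1') * (c4 + c5)| := le_abs_self _
      _ = |c1 - c1'| * |c4 + c5| := abs_mul _ _
      _ ≤ |c1 - c1'| * 2 := mul_le_mul le_rfl h45 (abs_nonneg _) hQ0
  have step3 : ‖b1 + b1'‖ ^ 2 + |c1 - c1'| ^ 2 ≤ 4 := by
    have hPsq : ‖b1 + b1'‖ ^ 2 = (b1.re + b1'.re) ^ 2 + (b1.im + b1'.im) ^ 2 := by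
      rw [Complex.sq_norm, Complex.normSq_apply, Complex.add_re, Complex.add_im]
      ring
    have hQsq : |c1 - c1'| ^ 2 = (c1 - c1') ^ 2 := sq_abs _
    rw [Complex.normSq_apply] at h1 h1'
    nlinarith [sq_nonneg (b1.re - b1'.re), sq_nonneg (b1.im - b1'.im), sq_nonneg (c1 + c1')]
  have step4 : |t| * ‖b1 + b1'‖ + 2 * |c1 - c1'| ≤ 2 * Real.sqrt (t ^ 2 + 4) := by
    have hL2 : (|t| * ‖b1 + b1'‖ + 2 * |c1 - c1'|) ^ 2
        ≤ (2 * Real.sqrt (t ^ 2 + 4)) ^ 2 := by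
      nlinarith [sq_nonneg (|t| * |c1 - c1'| - 2 * ‖b1 + b1'‖), sq_abs t,
        sq_nonneg t, step3]
    have h := Real.sqrt_le_sqrt hL2
    rwa [Real.sqrt_sq (by positivity), Real.sqrt_sq (by positivity)] at h
  linarith

lemma abs_le_one_of_param {c : ℝ} {b : ℂ} (h : c ^ 2 + Complex.normSq b = 1) :
    ‖b‖ ≤ 1 := by
  rw [Complex.norm_def, ← Real.sqrt_one]
  exact Real.sqrt_le_sqrt (by nlinarith [sq_nonneg c])

lemma c_sq_le_one_of_param {c : ℝ} {b : ℂ} (h : c ^ 2 + Complex.normSq b = 1) :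
    c ^ 2 ≤ 1 := by nlinarith [Complex.normSq_nonneg b]


/-- The maximal Bell value of the three-party Bell operator at `α = 1` on the state
`ρ_λ = λ|ψ₀₀₀⟩⟨ψ₀₀₀| + (1−λ)|ψ₁₀₀⟩⟨ψ₁₀₀|`, over all traceless `±1`-valued qubit
observables, is `2√((2λ−1)² + 4)`. -/
theorem bell_value_rho_lambda (lam : ℝ) (h0 : 0 ≤ lam) (h1 : lam ≤ 1) :
    IsGreatest
      { x : ℝ | ∃ A10 A11 A20 A21 A30 A31 : Matrix (Fin 2) (Fin 2) ℂ,
          (A10.trace = 0 ∧ A10.IsHermitian ∧ A10 ^ 2 = 1) ∧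
          (A11.trace = 0 ∧ A11.IsHermitian ∧ A11 ^ 2 = 1) ∧
          (A20.trace = 0 ∧ A20.IsHermitian ∧ A20 ^ 2 = 1) ∧
          (A21.trace = 0 ∧ A21.IsHermitian ∧ A21 ^ 2 = 1) ∧
          (A30.trace = 0 ∧ A30.IsHermitian ∧ A30 ^ 2 = 1) ∧
          (A31.trace = 0 ∧ A31.IsHermitian ∧ A31 ^ 2 = 1) ∧
          x = (((tensorN 3 ![A10 + A11, A20, A30]
                  + tensorN 3 ![A10 - A11, A21, 1]
                  + tensorN 3 ![A10 - A11, 1, A31])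
                * ((lam : ℂ) • outer (psi 0 0 0)
                    + ((1 - lam : ℝ) : ℂ) • outer (psi 1 0 0))).trace).re }
      (2 * Real.sqrt ((2 * lam - 1) ^ 2 + 4)) := by
  constructor
  · -- attained
    set t : ℝ := 2 * lam - 1 with ht
    set s : ℝ := Real.sqrt ((2 * lam - 1) ^ 2 + 4) with hsdef
    have hs_pos : 0 < s := Real.sqrt_pos.2 (by positivity)
    have hs2 : s ^ 2 = t ^ 2 + 4 := Real.sq_sqrt (by positivity)
    set u : ℝ := t / s with hu
    set v : ℝ := 2 / s with hv
    have huv : u ^ 2 + v ^ 2 = 1 := by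
      rw [hu, hv]
      field_simp
      linarith [hs2]
    refine ⟨!![(v:ℂ), (u:ℂ); (u:ℂ), -(v:ℂ)],
            !![-(v:ℂ), (u:ℂ); (u:ℂ), (v:ℂ)],
            !![0, 1; 1, 0], !![1, 0; 0, -1],
            !![0, 1; 1, 0], !![1, 0; 0, -1],
            ?_, ?_, ?_, ?_, ?_, ?_, ?_⟩
    · refine ⟨?_, ?_, ?_⟩
      · rw [Matrix.trace_fin_two]; simp
      · ext i j
        fin_cases i <;> fin_cases j <;>
          simp [Matrix.conjTranspose_apply, Complex.conj_ofReal]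
      · have huvC : ((u:ℂ)) ^ 2 + ((v:ℂ)) ^ 2 = 1 := by exact_mod_cast huv
        ext i j
        fin_cases i <;> fin_cases j <;>
          simp [pow_two, Matrix.mul_apply, Fin.sum_univ_two, Matrix.one_apply] <;>
          first | linear_combination huvC | linear_combination 2*huvC | linear_combination -huvC | linear_combination (-2)*huvC | ring
    · refine ⟨?_, ?_, ?_⟩
      · rw [Matrix.trace_fin_two]; simp
      · ext i j
        fin_cases i <;> fin_cases j <;>
          simp [Matrix.conjTranspose_apply, Complex.conj_ofReal]
      · have huvC : ((u:ℂ)) ^ 2 + ((v:ℂ)) ^ 2 = 1 := by exact_mod_cast huv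
        ext i j
        fin_cases i <;> fin_cases j <;>
          simp [pow_two, Matrix.mul_apply, Fin.sum_univ_two, Matrix.one_apply] <;>
          first | linear_combination huvC | linear_combination 2*huvC | linear_combination -huvC | linear_combination (-2)*huvC | ring
    · refine ⟨?_, ?_, ?_⟩
      · rw [Matrix.trace_fin_two]; simp
      · ext i j
        fin_cases i <;> fin_cases j <;> simp [Matrix.conjTranspose_apply]
      · ext i j
        fin_cases i <;> fin_cases j <;>
          simp [pow_two, Matrix.mul_apply, Fin.sum_univ_two, Matrix.one_apply]
    · refine ⟨?_, ?_, ?_⟩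
      · rw [Matrix.trace_fin_two]; simp
      · ext i j
        fin_cases i <;> fin_cases j <;> simp [Matrix.conjTranspose_apply]
      · ext i j
        fin_cases i <;> fin_cases j <;>
          simp [pow_two, Matrix.mul_apply, Fin.sum_univ_two, Matrix.one_apply]
    · refine ⟨?_, ?_, ?_⟩
      · rw [Matrix.trace_fin_two]; simp
      · ext i j
        fin_cases i <;> fin_cases j <;> simp [Matrix.conjTranspose_apply]
      · ext i j
        fin_cases i <;> fin_cases j <;>
          simp [pow_two, Matrix.mul_apply, Fin.sum_univ_two, Matrix.one_apply]
    · refine ⟨?_, ?_, ?_⟩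
      · rw [Matrix.trace_fin_two]; simp
      · ext i j
        fin_cases i <;> fin_cases j <;> simp [Matrix.conjTranspose_apply]
      · ext i j
        fin_cases i <;> fin_cases j <;>
          simp [pow_two, Matrix.mul_apply, Fin.sum_univ_two, Matrix.one_apply]
    · rw [value_formula lam v (-v) 0 0 1 1 ((u:ℂ)) ((u:ℂ)) 1 1 0 0]
      · have : (((u:ℂ) + (u:ℂ)) * 1 * 1).re = 2 * u := by
          simp [Complex.add_re]
          ring
        rw [this]
        rw [hu, hv]
        field_simp
        linear_combination hs2 + (t - 2*lam + 1)*ht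
      · refine ⟨rfl, ?_, rfl, ?_⟩ <;> simp [Complex.conj_ofReal]
      · refine ⟨?_, ?_, rfl, ?_⟩ <;> push_cast <;> simp [Complex.conj_ofReal]
      · refine ⟨?_, ?_, rfl, ?_⟩ <;> norm_num
      · refine ⟨?_, ?_, rfl, ?_⟩ <;> norm_num
      · refine ⟨?_, ?_, rfl, ?_⟩ <;> norm_num
      · refine ⟨?_, ?_, rfl, ?_⟩ <;> norm_num
  · -- upper bound
    rintro x ⟨A10, A11, A20, A21, A30, A31, ⟨ht10, hh10, hs10⟩, ⟨ht11, hh11, hs11⟩,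
      ⟨ht20, hh20, hs20⟩, ⟨ht21, hh21, hs21⟩, ⟨ht30, hh30, hs30⟩, ⟨ht31, hh31, hs31⟩, hx⟩
    obtain ⟨c1, b1, p10⟩ := obs_param ht10 hh10 hs10
    obtain ⟨c1', b1', p11⟩ := obs_param ht11 hh11 hs11
    obtain ⟨c2, b2, p20⟩ := obs_param ht20 hh20 hs20
    obtain ⟨c4, b4, p21⟩ := obs_param ht21 hh21 hs21
    obtain ⟨c3, b3, p30⟩ := obs_param ht30 hh30 hs30
    obtain ⟨c5, b5, p31⟩ := obs_param ht31 hh31 hs31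
    rw [hx, value_formula lam c1 c1' c2 c3 c4 c5 b1 b1' b2 b3 b4 b5 A10 A11 A20 A21 A30 A31
      ⟨p10.1, p10.2.1, p10.2.2.1, p10.2.2.2.1⟩ ⟨p11.1, p11.2.1, p11.2.2.1, p11.2.2.2.1⟩
      ⟨p20.1, p20.2.1, p20.2.2.1, p20.2.2.2.1⟩ ⟨p21.1, p21.2.1, p21.2.2.1, p21.2.2.2.1⟩
      ⟨p30.1, p30.2.1, p30.2.2.1, p30.2.2.2.1⟩ ⟨p31.1, p31.2.1, p31.2.2.1, p31.2.2.2.1⟩]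
    exact bound_lemma (2 * lam - 1) c1 c1' c4 c5 b1 b1' b2 b3
      p10.2.2.2.2 p11.2.2.2.2
      (abs_le_one_of_param p20.2.2.2.2) (abs_le_one_of_param p30.2.2.2.2)
      (c_sq_le_one_of_param p21.2.2.2.2) (c_sq_le_one_of_param p31.2.2.2.2)
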